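/- Let γ > 1 and let α satisfy α > 0 or α < −γ. Then there exist densities ρ₋, ρ₊ > 0 with ρ₋ ≠ ρ₊ such that γ · (ρ₊^{α/(α+γ)} − ρ₋^{α/(α+γ)}) / (ρ₊^{−γ/(α+γ)} − ρ₋^{−γ/(α+γ)}) ≠ (γ−1) · (ρ₊^{α/(α+γ−1)} − ρ₋^{α/(α+γ−1)}) / (ρ₊^{(1−γ)/(α+γ−1)} − ρ₋^{(1−γ)/(α+γ−1)}). -/

import Mathlib

open Filter Real

private lemma rpow_tendsto_zero {e : ℝ} (he : e < 0) :
    Tendsto (fun x : ℝ => x ^ e) atTop (nhds 0) := by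
  have h := tendsto_rpow_neg_atTop (y := -e) (by linarith)
  simpa using h

/-- For every `γ > 1` and every `α` with `α > 0` or `α < -γ`, there exist
positive densities `ρ₋ ≠ ρ₊` at which the two density flux values forced by
entropy conservation (at constant pressure and velocity, and along the curve
`p₋ = p₊ (ρ₋/ρ₊)^(α/(α+γ-1))` at constant velocity, respectively) differ:
`γ ⟦ρ^(α/(α+γ))⟧ / ⟦ρ^(-γ/(α+γ))⟧ ≠ (γ-1) ⟦ρ^(α/(α+γ-1))⟧ / ⟦ρ^((1-γ)/(α+γ-1))⟧`. -/
theorem exists_densities_jump_ratios_differ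
    (γ α : ℝ) (hγ : 1 < γ) (hα : 0 < α ∨ α < -γ) :
    ∃ ρm ρp : ℝ, 0 < ρm ∧ 0 < ρp ∧ ρm ≠ ρp ∧
      γ * ((ρp ^ (α / (α + γ)) - ρm ^ (α / (α + γ))) /
            (ρp ^ (-γ / (α + γ)) - ρm ^ (-γ / (α + γ)))) ≠
      (γ - 1) * ((ρp ^ (α / (α + γ - 1)) - ρm ^ (α / (α + γ - 1))) /
            (ρp ^ ((1 - γ) / (α + γ - 1)) - ρm ^ ((1 - γ) / (α + γ - 1)))) := by
  by_contra hcon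
  push_neg at hcon
  set a : ℝ := α / (α + γ) with ha_def
  set b : ℝ := α / (α + γ - 1) with hb_def
  rcases hα with hα | hα
  · -- case 0 < α
    have hc : (0:ℝ) < α + γ := by linarith
    have hc1 : (0:ℝ) < α + γ - 1 := by linarith
    have hne : α + γ ≠ 0 := hc.ne'
    have hne1 : α + γ - 1 ≠ 0 := hc1.ne'
    have hea : -γ / (α + γ) = a - 1 := by
      rw [ha_def]; field_simp; ring
    have heb : (1 - γ) / (α + γ - 1) = b - 1 := by
      rw [hb_def]; field_simp; ring
    have hL : ∀ x : ℝ, 1 < x →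
        γ * ((x ^ a - 1) / (x ^ (a - 1) - 1)) =
        (γ - 1) * ((x ^ b - 1) / (x ^ (b - 1) - 1)) := by
      intro x hx
      have := hcon 1 x one_pos (by linarith) (by linarith [hx.ne'])
      simpa [hea, heb, Real.one_rpow] using this
    have ha0 : 0 < a := div_pos hα hc
    have hab : a < b := div_lt_div_of_pos_left hα hc1 (by linarith)
    have ha1 : a - 1 < 0 := by
      rw [← hea]; exact div_neg_of_neg_of_pos (by linarith) hc
    have hb1 : b - 1 < 0 := by
      rw [← heb]; exact div_neg_of_neg_of_pos (by linarith) hc1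
    have T1 : Tendsto (fun x : ℝ => γ * ((x ^ (a - b) - x ^ (-b)) / (x ^ (a - 1) - 1)))
        atTop (nhds (γ * ((0 - 0) / (0 - 1)))) := by
      exact (((rpow_tendsto_zero (by linarith)).sub
        (rpow_tendsto_zero (by linarith))).div
        ((rpow_tendsto_zero ha1).sub tendsto_const_nhds) (by norm_num)).const_mul γ
    have T2 : Tendsto (fun x : ℝ => (γ - 1) * ((1 - x ^ (-b)) / (x ^ (b - 1) - 1)))
        atTop (nhds ((γ - 1) * ((1 - 0) / (0 - 1)))) := by
      exact ((tendsto_const_nhds.sub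
        (rpow_tendsto_zero (by linarith))).div
        ((rpow_tendsto_zero hb1).sub tendsto_const_nhds) (by norm_num)).const_mul (γ - 1)
    have E1 : (fun x : ℝ => γ * ((x ^ a - 1) / (x ^ (a - 1) - 1)) * x ^ (-b))
        =ᶠ[atTop] (fun x : ℝ => γ * ((x ^ (a - b) - x ^ (-b)) / (x ^ (a - 1) - 1))) := by
      filter_upwards [eventually_gt_atTop (1:ℝ)] with x hx
      have hx0 : (0:ℝ) < x := lt_trans one_pos hx
      have hnum : (x ^ a - 1) * x ^ (-b) = x ^ (a - b) - x ^ (-b) := by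
        rw [sub_mul, one_mul, ← Real.rpow_add hx0, ← sub_eq_add_neg]
      rw [mul_assoc, div_mul_eq_mul_div, hnum]
    have E2 : (fun x : ℝ => (γ - 1) * ((x ^ b - 1) / (x ^ (b - 1) - 1)) * x ^ (-b))
        =ᶠ[atTop] (fun x : ℝ => (γ - 1) * ((1 - x ^ (-b)) / (x ^ (b - 1) - 1))) := by
      filter_upwards [eventually_gt_atTop (1:ℝ)] with x hx
      have hx0 : (0:ℝ) < x := lt_trans one_pos hx
      have hnum : (x ^ b - 1) * x ^ (-b) = 1 - x ^ (-b) := by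
        rw [sub_mul, one_mul, ← Real.rpow_add hx0]
        simp
      rw [mul_assoc, div_mul_eq_mul_div, hnum]
    have Eeq : (fun x : ℝ => γ * ((x ^ a - 1) / (x ^ (a - 1) - 1)) * x ^ (-b))
        =ᶠ[atTop] (fun x : ℝ => (γ - 1) * ((x ^ b - 1) / (x ^ (b - 1) - 1)) * x ^ (-b)) := by
      filter_upwards [eventually_gt_atTop (1:ℝ)] with x hx
      rw [hL x hx]
    have TA : Tendsto (fun x : ℝ => γ * ((x ^ a - 1) / (x ^ (a - 1) - 1)) * x ^ (-b))
        atTop (nhds (γ * ((0 - 0) / (0 - 1)))) := T1.congr' E1.symm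
    have TB : Tendsto (fun x : ℝ => γ * ((x ^ a - 1) / (x ^ (a - 1) - 1)) * x ^ (-b))
        atTop (nhds ((γ - 1) * ((1 - 0) / (0 - 1)))) :=
      (T2.congr' E2.symm).congr' Eeq.symm
    have hfin := tendsto_nhds_unique TA TB
    norm_num at hfin
    all_goals linarith
  · -- case α < -γ
    have hc : α + γ < 0 := by linarith
    have hc1 : α + γ - 1 < 0 := by linarith
    have hne : α + γ ≠ 0 := hc.ne
    have hne1 : α + γ - 1 ≠ 0 := hc1.ne
    have hea : -γ / (α + γ) = a - 1 := by
      rw [ha_def]; field_simp; ring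
    have heb : (1 - γ) / (α + γ - 1) = b - 1 := by
      rw [hb_def]; field_simp; ring
    have hL : ∀ x : ℝ, 1 < x →
        γ * ((x ^ a - 1) / (x ^ (a - 1) - 1)) =
        (γ - 1) * ((x ^ b - 1) / (x ^ (b - 1) - 1)) := by
      intro x hx
      have := hcon 1 x one_pos (by linarith) (by linarith [hx.ne'])
      simpa [hea, heb, Real.one_rpow] using this
    have ha1 : 0 < a - 1 := by
      rw [← hea]; exact div_pos_of_neg_of_neg (by linarith) hc
    have hb1 : 0 < b - 1 := by
      rw [← heb]; exact div_pos_of_neg_of_neg (by linarith) hc1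
    have key : ∀ (c : ℝ), 0 < c - 1 → ∀ x : ℝ, 1 < x →
        ((x ^ c - 1) / (x ^ (c - 1) - 1)) * x ^ (-(1:ℝ)) =
        (1 - x ^ (-c)) / (1 - x ^ (1 - c)) := by
      intro c hc' x hx
      have hx0 : (0:ℝ) < x := lt_trans one_pos hx
      have hxc : (0:ℝ) < x ^ c := Real.rpow_pos_of_pos hx0 c
      have hd1 : x ^ (c - 1) - 1 ≠ 0 := by
        have : 1 < x ^ (c - 1) :=
          (Real.one_lt_rpow_iff_of_pos hx0).mpr (Or.inl ⟨hx, hc'⟩)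
        linarith
      have hd2 : 1 - x ^ (1 - c) ≠ 0 := by
        have : x ^ (1 - c) < 1 :=
          Real.rpow_lt_one_of_one_lt_of_neg hx (by linarith)
        linarith
      rw [div_mul_eq_mul_div, div_eq_div_iff hd1 hd2]
      rw [show x ^ (c - 1) = x ^ c / x from by
            rw [Real.rpow_sub hx0, Real.rpow_one],
          show x ^ (1 - c) = x / x ^ c from by
            rw [Real.rpow_sub hx0, Real.rpow_one],
          show x ^ (-c) = (x ^ c)⁻¹ from by
            rw [Real.rpow_neg hx0.le],
          Real.rpow_neg_one]
      field_simp
      try norm_num [mul_comm]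
    have T1 : Tendsto (fun x : ℝ => γ * ((1 - x ^ (-a)) / (1 - x ^ (1 - a))))
        atTop (nhds (γ * ((1 - 0) / (1 - 0)))) := by
      exact ((tendsto_const_nhds.sub (rpow_tendsto_zero (by linarith))).div
        (tendsto_const_nhds.sub (rpow_tendsto_zero (by linarith))) (by norm_num)).const_mul γ
    have T2 : Tendsto (fun x : ℝ => (γ - 1) * ((1 - x ^ (-b)) / (1 - x ^ (1 - b))))
        atTop (nhds ((γ - 1) * ((1 - 0) / (1 - 0)))) := by
      exact ((tendsto_const_nhds.sub (rpow_tendsto_zero (by linarith))).div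
        (tendsto_const_nhds.sub (rpow_tendsto_zero (by linarith))) (by norm_num)).const_mul (γ - 1)
    have E1 : (fun x : ℝ => γ * ((x ^ a - 1) / (x ^ (a - 1) - 1)) * x ^ (-(1:ℝ)))
        =ᶠ[atTop] (fun x : ℝ => γ * ((1 - x ^ (-a)) / (1 - x ^ (1 - a)))) := by
      filter_upwards [eventually_gt_atTop (1:ℝ)] with x hx
      rw [mul_assoc, key a ha1 x hx]
    have E2 : (fun x : ℝ => (γ - 1) * ((x ^ b - 1) / (x ^ (b - 1) - 1)) * x ^ (-(1:ℝ)))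
        =ᶠ[atTop] (fun x : ℝ => (γ - 1) * ((1 - x ^ (-b)) / (1 - x ^ (1 - b)))) := by
      filter_upwards [eventually_gt_atTop (1:ℝ)] with x hx
      rw [mul_assoc, key b hb1 x hx]
    have Eeq : (fun x : ℝ => γ * ((x ^ a - 1) / (x ^ (a - 1) - 1)) * x ^ (-(1:ℝ)))
        =ᶠ[atTop] (fun x : ℝ => (γ - 1) * ((x ^ b - 1) / (x ^ (b - 1) - 1)) * x ^ (-(1:ℝ))) := by
      filter_upwards [eventually_gt_atTop (1:ℝ)] with x hx
      rw [hL x hx]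
    have TA : Tendsto (fun x : ℝ => γ * ((x ^ a - 1) / (x ^ (a - 1) - 1)) * x ^ (-(1:ℝ)))
        atTop (nhds (γ * ((1 - 0) / (1 - 0)))) := T1.congr' E1.symm
    have TB : Tendsto (fun x : ℝ => γ * ((x ^ a - 1) / (x ^ (a - 1) - 1)) * x ^ (-(1:ℝ)))
        atTop (nhds ((γ - 1) * ((1 - 0) / (1 - 0)))) :=
      (T2.congr' E2.symm).congr' Eeq.symm
    have hfin := tendsto_nhds_unique TA TB
    norm_num at hfin
    all_goals linarith
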